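/- Let n > 2 and let x be a real probability vector. Its Yager negation y_j = (1−x_j)/(n−1) satisfies y_j − 1/n = −(x_j − 1/n)/(n−1) for every j; hence ∑_j (y_j − 1/n)² = (n−1)^{-2} ∑_j (x_j − 1/n)². Consequently, for any negator N whose output is majorized by the Yager negation at every step, the m-th iterate P_m satisfies ∑_j (p_{m,j} − 1/n)² ≤ (n−1)^{-2m} ∑_j (p_j − 1/n)², and p_{m,j} → 1/n as m → ∞. -/

import Mathlib

/-- Sum of the `k` largest entries of a real vector, as the supremum of sums
over subsets of cardinality `k`. -/
noncomputable def topSum {n : ℕ} (x : Fin n → ℝ) (k : ℕ) : ℝ :=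
  sSup ((fun A : Finset (Fin n) => ∑ i ∈ A, x i) '' {A | A.card = k})

/-- `x` majorizes `y`: partial sums of the decreasing rearrangement of `x`
dominate those of `y`, and the total sums agree. -/
def Majorizes {n : ℕ} (x y : Fin n → ℝ) : Prop :=
  (∀ k : ℕ, topSum y k ≤ topSum x k) ∧ ∑ i, x i = ∑ i, y i

open Finset
section AuxMaj

lemma strictMono_val_le {k m : ℕ} {f : Fin k → Fin m} (hf : StrictMono f) :
    ∀ j : Fin k, (j : ℕ) ≤ (f j : ℕ) := by
  rintro ⟨j, hj⟩
  induction j with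
  | zero => exact Nat.zero_le _
  | succ i ih =>
    have h1 := ih (Nat.lt_of_succ_lt hj)
    have h2 : f ⟨i, Nat.lt_of_succ_lt hj⟩ < f ⟨i + 1, hj⟩ := hf (by simp [Fin.lt_def])
    have h3 := Fin.lt_def.mp h2
    simp only [Fin.val_mk] at h1 h3 ⊢
    omega

lemma nat_maj_sq (n : ℕ) (a b : ℕ → ℝ)
    (hb : ∀ i j, i ≤ j → j < n → b j ≤ b i)
    (hAB : ∀ k, k ≤ n → ∑ i ∈ range k, b i ≤ ∑ i ∈ range k, a i)
    (hn : ∑ i ∈ range n, a i = ∑ i ∈ range n, b i) :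
    ∑ i ∈ range n, (b i) ^ 2 ≤ ∑ i ∈ range n, (a i) ^ 2 := by
  rcases Nat.eq_zero_or_pos n with h0 | h0
  · simp [h0]
  set c : ℕ → ℝ := fun i => a i - b i with hc
  have key : 0 ≤ ∑ i ∈ range n, b i * c i := by
    have h2 : ∑ i ∈ range n, c i = 0 := by
      simp only [hc, Finset.sum_sub_distrib, hn, sub_self]
    have h1 : ∑ i ∈ range n, b i * c i
        = ∑ i ∈ range n, (b i - b (n - 1)) * c i + b (n - 1) * ∑ i ∈ range n, c i := by
      rw [Finset.mul_sum, ← Finset.sum_add_distrib]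
      exact Finset.sum_congr rfl fun i _ => by ring
    rw [h1, h2, mul_zero, add_zero]
    have h3 : ∀ i ∈ range n, (b i - b (n - 1)) * c i
        = ∑ j ∈ Finset.Ico i (n - 1), (b j - b (j + 1)) * c i := by
      intro i hi
      rw [← Finset.sum_mul]
      congr 1
      have hi' : i ≤ n - 1 := by
        have := Finset.mem_range.mp hi; omega
      have t1 : ∀ m : ℕ, ∑ j ∈ range m, (b j - b (j + 1)) = b 0 - b m :=
        fun m => Finset.sum_range_sub' b m
      rw [Finset.sum_Ico_eq_sub _ hi', t1, t1]
      ring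
    rw [Finset.sum_congr rfl h3]
    have hsub : range (n - 1) ⊆ range n := Finset.range_subset_range.mpr (by omega)
    rw [← Finset.sum_subset hsub (by
      intro i _ hi
      have : n - 1 ≤ i := by
        simp only [Finset.mem_range] at hi; omega
      rw [Finset.Ico_eq_empty (by omega), Finset.sum_empty])]
    have hr : range (n - 1) = Finset.Ico 0 (n - 1) := by
      rw [Finset.range_eq_Ico]
    rw [hr, Finset.sum_Ico_Ico_comm]
    apply Finset.sum_nonneg
    intro j hj
    have hj' : j < n - 1 := (Finset.mem_Ico.mp hj).2
    rw [← Finset.mul_sum]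
    apply mul_nonneg
    · have := hb j (j + 1) (by omega) (by omega); linarith
    · have : Finset.Ico 0 (j + 1) = range (j + 1) := by rw [Finset.range_eq_Ico]
      rw [this]
      have := hAB (j + 1) (by omega)
      simp only [hc, Finset.sum_sub_distrib]
      linarith
  have hterm : ∀ i ∈ range n, b i ^ 2 + 2 * (b i * c i) ≤ a i ^ 2 := by
    intro i _
    have h := sq_nonneg (a i - b i)
    simp only [hc]
    nlinarith
  have := Finset.sum_le_sum hterm
  rw [Finset.sum_add_distrib] at this
  rw [← Finset.mul_sum] at this
  linarith

lemma topSum_bddAbove {n : ℕ} (x : Fin n → ℝ) (k : ℕ) :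
    BddAbove ((fun A : Finset (Fin n) => ∑ i ∈ A, x i) '' {A | A.card = k}) :=
  (Set.toFinite _).bddAbove

lemma le_topSum {n : ℕ} (x : Fin n → ℝ) {k : ℕ} (A : Finset (Fin n)) (hA : A.card = k) :
    ∑ i ∈ A, x i ≤ topSum x k :=
  le_csSup (topSum_bddAbove x k) ⟨A, hA, rfl⟩

lemma topSum_le {n : ℕ} (x : Fin n → ℝ) {k : ℕ} (A0 : Finset (Fin n)) (hA0 : A0.card = k)
    {c : ℝ} (h : ∀ A : Finset (Fin n), A.card = k → ∑ i ∈ A, x i ≤ c) :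
    topSum x k ≤ c :=
  csSup_le ⟨_, A0, hA0, rfl⟩ (by rintro _ ⟨A, hA, rfl⟩; exact h A hA)

lemma topSum_comp_equiv {n : ℕ} (x : Fin n → ℝ) (e : Equiv.Perm (Fin n)) (k : ℕ) :
    topSum (x ∘ e) k = topSum x k := by
  unfold topSum
  congr 1
  ext s
  simp only [Set.mem_image, Set.mem_setOf_eq]
  constructor
  · rintro ⟨A, hA, rfl⟩
    exact ⟨A.map e.toEmbedding, by simp [hA], by rw [Finset.sum_map]; rfl⟩
  · rintro ⟨A, hA, rfl⟩
    refine ⟨A.map e.symm.toEmbedding, by simp [hA], ?_⟩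
    rw [Finset.sum_map]
    simp

lemma mapCast_card {n k : ℕ} (hk : k ≤ n) :
    ((Finset.univ : Finset (Fin k)).map (Fin.castLEEmb hk)).card = k := by
  simp

lemma sorted_topSum {n : ℕ} {b : Fin n → ℝ} (hb : Antitone b) {k : ℕ} (hk : k ≤ n) :
    topSum b k = ∑ j : Fin k, b (Fin.castLE hk j) := by
  have hsum : ∑ i ∈ (Finset.univ : Finset (Fin k)).map (Fin.castLEEmb hk), b i
      = ∑ j : Fin k, b (Fin.castLE hk j) := by
    rw [Finset.sum_map]; rfl
  apply le_antisymm
  · apply topSum_le b _ (mapCast_card hk)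
    intro A hA
    have hmap : A = (Finset.univ : Finset (Fin k)).map ((A.orderEmbOfFin hA).toEmbedding) := by
      ext i
      simp only [Finset.mem_map, Finset.mem_univ, true_and]
      constructor
      · intro hi
        have : i ∈ Set.range (A.orderEmbOfFin hA) := by
          rw [Finset.range_orderEmbOfFin]; exact hi
        exact this
      · rintro ⟨a, rfl⟩; exact Finset.orderEmbOfFin_mem A hA a
    rw [hmap, Finset.sum_map]
    apply Finset.sum_le_sum
    intro j _
    apply hb
    rw [Fin.le_def]
    exact strictMono_val_le (A.orderEmbOfFin hA).strictMono j
  · rw [← hsum]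
    exact le_topSum b _ (mapCast_card hk)

lemma exists_antitone {n : ℕ} (x : Fin n → ℝ) :
    ∃ e : Equiv.Perm (Fin n), Antitone (x ∘ e) := by
  refine ⟨Equiv.trans (Fin.revPerm) (Tuple.sort x), ?_⟩
  intro i j hij
  have := Tuple.monotone_sort x (Fin.rev_le_rev.mpr hij)
  simpa [Function.comp] using this

lemma sq_sum_le_of_majorizes {n : ℕ} {x y : Fin n → ℝ} (h : Majorizes x y) :
    ∑ i, (y i) ^ 2 ≤ ∑ i, (x i) ^ 2 := by
  obtain ⟨ex, hax⟩ := exists_antitone x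
  obtain ⟨ey, hay⟩ := exists_antitone y
  set a : Fin n → ℝ := x ∘ ex with ha
  set b : Fin n → ℝ := y ∘ ey with hbdef
  set a' : ℕ → ℝ := fun i => if hi : i < n then a ⟨i, hi⟩ else 0 with ha'
  set b' : ℕ → ℝ := fun i => if hi : i < n then b ⟨i, hi⟩ else 0 with hb'
  have hconva : ∀ k (hk : k ≤ n), ∑ i ∈ range k, a' i = ∑ j : Fin k, a (Fin.castLE hk j) := by
    intro k hk
    rw [Finset.sum_range]
    apply Finset.sum_congr rfl
    intro j _
    have : (j : ℕ) < n := lt_of_lt_of_le j.isLt hk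
    simp only [ha', dif_pos this]
    rfl
  have hconvb : ∀ k (hk : k ≤ n), ∑ i ∈ range k, b' i = ∑ j : Fin k, b (Fin.castLE hk j) := by
    intro k hk
    rw [Finset.sum_range]
    apply Finset.sum_congr rfl
    intro j _
    have : (j : ℕ) < n := lt_of_lt_of_le j.isLt hk
    simp only [hb', dif_pos this]
    rfl
  have hsuma : ∑ i, a i = ∑ i, x i := Equiv.sum_comp ex x
  have hsumb : ∑ i, b i = ∑ i, y i := Equiv.sum_comp ey y
  have hnat := nat_maj_sq n a' b'
    (by
      intro i j hij hj
      have hi : i < n := lt_of_le_of_lt hij hj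
      simp only [hb', dif_pos hi, dif_pos hj]
      exact hay (by simpa [Fin.le_def] using hij))
    (by
      intro k hk
      rw [hconva k hk, hconvb k hk, ← sorted_topSum hax hk, ← sorted_topSum hay hk,
        topSum_comp_equiv, topSum_comp_equiv]
      exact h.1 k)
    (by
      rw [hconva n le_rfl, hconvb n le_rfl]
      have e1 : ∑ j : Fin n, a (Fin.castLE le_rfl j) = ∑ i, a i := by
        apply Finset.sum_congr rfl; intro j _; rfl
      have e2 : ∑ j : Fin n, b (Fin.castLE le_rfl j) = ∑ i, b i := by
        apply Finset.sum_congr rfl; intro j _; rfl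
      rw [e1, e2, hsuma, hsumb, h.2])
  have ea : ∑ i ∈ range n, (a' i) ^ 2 = ∑ i, (x i) ^ 2 := by
    rw [Finset.sum_range]
    have : ∀ j : Fin n, (a' (j : ℕ)) ^ 2 = (a j) ^ 2 := by
      intro j; simp only [ha', dif_pos j.isLt]
    rw [Fintype.sum_congr _ _ this]
    exact Equiv.sum_comp ex (fun i => (x i) ^ 2)
  have eb : ∑ i ∈ range n, (b' i) ^ 2 = ∑ i, (y i) ^ 2 := by
    rw [Finset.sum_range]
    have : ∀ j : Fin n, (b' (j : ℕ)) ^ 2 = (b j) ^ 2 := by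
      intro j; simp only [hb', dif_pos j.isLt]
    rw [Fintype.sum_congr _ _ this]
    exact Equiv.sum_comp ey (fun i => (y i) ^ 2)
  rw [← ea, ← eb]
  exact hnat

lemma maj_Q_le {n : ℕ} {x y : Fin n → ℝ} (h : Majorizes x y) (c : ℝ) :
    ∑ i, (y i - c) ^ 2 ≤ ∑ i, (x i - c) ^ 2 := by
  have e1 : ∀ z : Fin n → ℝ, ∑ i, (z i - c) ^ 2
      = ∑ i, (z i) ^ 2 - 2 * c * (∑ i, z i) + n * c ^ 2 := by
    intro z
    have : ∀ i ∈ (Finset.univ : Finset (Fin n)), (z i - c) ^ 2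
        = (z i) ^ 2 - 2 * c * z i + c ^ 2 := fun i _ => by ring
    rw [Finset.sum_congr rfl this, Finset.sum_add_distrib, Finset.sum_sub_distrib,
      ← Finset.mul_sum]
    simp [Finset.card_univ]
  rw [e1 x, e1 y, ← h.2]
  have := sq_sum_le_of_majorizes h
  linarith

end AuxMaj


theorem stmt_18 (n : ℕ) (hn : 2 < n) (x : Fin n → ℝ)
    (hpos : ∀ i, 0 ≤ x i) (hsum : ∑ i, x i = 1) :
    (∀ j, (1 - x j) / ((n : ℝ) - 1) - 1 / n = -(x j - 1 / n) / ((n : ℝ) - 1)) ∧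
    (∑ j, ((1 - x j) / ((n : ℝ) - 1) - 1 / n) ^ 2
      = (((n : ℝ) - 1) ^ 2)⁻¹ * ∑ j, (x j - 1 / n) ^ 2) ∧
    (∀ N : (Fin n → ℝ) → (Fin n → ℝ),
      (∀ y : Fin n → ℝ, (∀ i, 0 ≤ y i) → ∑ i, y i = 1 →
        (∀ i, 0 ≤ N y i) ∧ ∑ i, N y i = 1 ∧
        Majorizes (fun j => (1 - y j) / ((n : ℝ) - 1)) (N y)) →
      (∀ m : ℕ, ∑ j, (N^[m] x j - 1 / n) ^ 2
        ≤ (((n : ℝ) - 1) ^ (2 * m))⁻¹ * ∑ j, (x j - 1 / n) ^ 2) ∧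
      (∀ j, Filter.Tendsto (fun m => N^[m] x j) Filter.atTop (nhds (1 / n)))) := by
  have hn2 : (2 : ℝ) < (n : ℝ) := by exact_mod_cast hn
  have hn1 : (1 : ℝ) < (n : ℝ) - 1 := by linarith
  have hne : ((n : ℝ) - 1) ≠ 0 := by linarith
  have hn0 : (n : ℝ) ≠ 0 := by linarith
  have hpt : ∀ (y : Fin n → ℝ) (j : Fin n),
      (1 - y j) / ((n : ℝ) - 1) - 1 / n = -(y j - 1 / n) / ((n : ℝ) - 1) := by
    intro y j
    field_simp
    ring
  have hQy : ∀ y : Fin n → ℝ, ∑ j, ((1 - y j) / ((n : ℝ) - 1) - 1 / n) ^ 2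
      = (((n : ℝ) - 1) ^ 2)⁻¹ * ∑ j, (y j - 1 / n) ^ 2 := by
    intro y
    rw [Finset.mul_sum]
    apply Finset.sum_congr rfl
    intro j _
    rw [hpt y j]
    field_simp
  refine ⟨hpt x, hQy x, ?_⟩
  intro N hN
  have main : ∀ m : ℕ, (∀ i, 0 ≤ N^[m] x i) ∧ (∑ i, N^[m] x i = 1) ∧
      ∑ j, (N^[m] x j - 1 / n) ^ 2
        ≤ (((n : ℝ) - 1) ^ (2 * m))⁻¹ * ∑ j, (x j - 1 / n) ^ 2 := by
    intro m
    induction m with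
    | zero =>
      refine ⟨by simpa using hpos, by simpa using hsum, ?_⟩
      simp
    | succ m ih =>
      obtain ⟨hp, hs, hq⟩ := ih
      obtain ⟨hp', hs', hmaj⟩ := hN _ hp hs
      refine ⟨?_, ?_, ?_⟩
      · intro i; rw [Function.iterate_succ_apply']; exact hp' i
      · simp only [Function.iterate_succ_apply']; exact hs'
      · simp only [Function.iterate_succ_apply']
        calc ∑ j, (N (N^[m] x) j - 1 / n) ^ 2
            ≤ ∑ j, ((1 - N^[m] x j) / ((n : ℝ) - 1) - 1 / n) ^ 2 :=
              maj_Q_le hmaj (1 / n)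
          _ = (((n : ℝ) - 1) ^ 2)⁻¹ * ∑ j, (N^[m] x j - 1 / n) ^ 2 := hQy _
          _ ≤ (((n : ℝ) - 1) ^ 2)⁻¹
              * ((((n : ℝ) - 1) ^ (2 * m))⁻¹ * ∑ j, (x j - 1 / n) ^ 2) := by
              apply mul_le_mul_of_nonneg_left hq
              positivity
          _ = (((n : ℝ) - 1) ^ (2 * (m + 1)))⁻¹ * ∑ j, (x j - 1 / n) ^ 2 := by
              rw [← mul_assoc, ← mul_inv, ← pow_add]
              congr 2
              ring
  refine ⟨fun m => (main m).2.2, ?_⟩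
  intro j
  set Qx := ∑ j, (x j - 1 / (n : ℝ)) ^ 2 with hQx
  have hQx0 : 0 ≤ Qx := Finset.sum_nonneg fun i _ => sq_nonneg _
  set r : ℝ := (((n : ℝ) - 1) ^ 2)⁻¹ with hrdef
  have hr0 : 0 ≤ r := by positivity
  have hr1 : r < 1 := by
    apply inv_lt_one_of_one_lt₀
    nlinarith
  have hbound : ∀ m : ℕ, (N^[m] x j - 1 / n) ^ 2 ≤ r ^ m * Qx := by
    intro m
    have h1 := (main m).2.2
    have h2 : (N^[m] x j - 1 / n) ^ 2 ≤ ∑ i, (N^[m] x i - 1 / n) ^ 2 :=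
      Finset.single_le_sum (f := fun i => (N^[m] x i - 1 / (n : ℝ)) ^ 2)
        (fun i _ => sq_nonneg _) (Finset.mem_univ j)
    have h3 : (((n : ℝ) - 1) ^ (2 * m))⁻¹ = r ^ m := by
      rw [hrdef, pow_mul, ← inv_pow]
    rw [h3] at h1
    calc (N^[m] x j - 1 / n) ^ 2 ≤ ∑ i, (N^[m] x i - 1 / n) ^ 2 := h2
      _ ≤ r ^ m * Qx := h1
  have hlim : Filter.Tendsto (fun m : ℕ => r ^ m * Qx) Filter.atTop (nhds 0) := by
    have := tendsto_pow_atTop_nhds_zero_of_lt_one hr0 hr1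
    simpa using this.mul_const Qx
  have hsq : Filter.Tendsto (fun m : ℕ => (N^[m] x j - 1 / n) ^ 2)
      Filter.atTop (nhds 0) :=
    squeeze_zero (fun m => sq_nonneg _) hbound hlim
  have habs : Filter.Tendsto (fun m : ℕ => |N^[m] x j - 1 / n|) Filter.atTop (nhds 0) := by
    have hcont := (Real.continuous_sqrt.tendsto 0).comp hsq
    simp only [Real.sqrt_zero] at hcont
    have : (fun m : ℕ => Real.sqrt ((N^[m] x j - 1 / n) ^ 2))
        = fun m : ℕ => |N^[m] x j - 1 / n| := by
      funext m; exact Real.sqrt_sq_eq_abs _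
    rwa [← this]
  have hz : Filter.Tendsto (fun m : ℕ => N^[m] x j - 1 / n) Filter.atTop (nhds 0) := by
    rw [tendsto_zero_iff_abs_tendsto_zero]
    exact habs
  have := hz.add_const (1 / (n : ℝ))
  simpa using this
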